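/- Let H be a path graph on n + 1 vertices (n ≥ 1 edges) and G = L(H), so G is a path on n vertices. Then the clique complex Δ(G) is Gorenstein if and only if n ≤ 3, i.e., H is a path of length at most 3. -/

import Mathlib

open Finset SimpleGraph

variable {V : Type*} [DecidableEq V]

/-- An abstract simplicial complex: contains the empty face and is downward closed. -/
def IsComplex (K : Set (Finset V)) : Prop :=
  (∅ : Finset V) ∈ K ∧ ∀ F ∈ K, ∀ G ⊆ F, G ∈ K

/-- `F` is a facet (maximal face) of `K`. -/
def IsFacet (K : Set (Finset V)) (F : Finset V) : Prop :=
  F ∈ K ∧ ∀ G ∈ K, F ⊆ G → F = G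

/-- `K` is pure: all facets have the same cardinality. -/
def IsPure (K : Set (Finset V)) : Prop :=
  ∀ F G, IsFacet K F → IsFacet K G → F.card = G.card

/-- Deletion `K - v`. -/
def del (K : Set (Finset V)) (v : V) : Set (Finset V) := {F ∈ K | v ∉ F}

/-- The link of a vertex. -/
def link (K : Set (Finset V)) (v : V) : Set (Finset V) :=
  {F | v ∉ F ∧ insert v F ∈ K}

/-- A shedding vertex: a vertex such that no face of the link is a facet of the deletion. -/
def IsSheddingVertex (K : Set (Finset V)) (v : V) : Prop :=
  ({v} : Finset V) ∈ K ∧ ∀ F ∈ link K v, ¬ IsFacet (del K v) F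

/-- `K` is a (possibly empty-face-only) simplex: the power set of some finset. -/
def IsSimplexComplex (K : Set (Finset V)) : Prop :=
  ∃ F : Finset V, K = {G | G ⊆ F}

/-- Vertex decomposability. -/
inductive VertexDecomposable : Set (Finset V) → Prop
  | simplex (K : Set (Finset V)) : IsSimplexComplex K → VertexDecomposable K
  | shed (K : Set (Finset V)) (v : V) : IsSheddingVertex K v →
      VertexDecomposable (link K v) → VertexDecomposable (del K v) →
      VertexDecomposable K

/-- The complex generated by a family of finsets. -/
def gen (S : Set (Finset V)) : Set (Finset V) := {G | ∃ F ∈ S, G ⊆ F}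

/-- A shelling order of the facets of `K`. -/
def IsShelling (K : Set (Finset V)) (l : List (Finset V)) : Prop :=
  l.Nodup ∧ (∀ F, IsFacet K F ↔ F ∈ l) ∧
  ∀ i : ℕ, (h : i + 1 < l.length) →
    (∃ F, IsFacet (gen {F | F ∈ l.take (i+1)} ∩ gen {l.get ⟨i+1, h⟩}) F) ∧
    ∀ F, IsFacet (gen {F | F ∈ l.take (i+1)} ∩ gen {l.get ⟨i+1, h⟩}) F →
      F.card + 1 = (l.get ⟨i+1, h⟩).card

def Shellable (K : Set (Finset V)) : Prop := ∃ l, IsShelling K l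

/-- Two facets are adjacent (intersect in codimension one). -/
def FacetAdj (K : Set (Finset V)) (F G : Finset V) : Prop :=
  IsFacet K F ∧ IsFacet K G ∧ (F ∩ G).card + 1 = F.card ∧ (F ∩ G).card + 1 = G.card

/-- A pure complex is strongly connected (connected in codimension 1). -/
def StronglyConnected (K : Set (Finset V)) : Prop :=
  IsPure K ∧ ∀ F G, IsFacet K F → IsFacet K G → Relation.ReflTransGen (FacetAdj K) F G

/-- The clique complex of a graph. -/
def cliqueComplex (G : SimpleGraph V) : Set (Finset V) := {F | G.IsClique (F : Set V)}

/-- The pure `i`-skeleton of `K`: generated by the faces of dimension `i`. -/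
def pureSkeleton (K : Set (Finset V)) (i : ℕ) : Set (Finset V) :=
  {G | ∃ F ∈ K, F.card = i + 1 ∧ G ⊆ F}

/-- The link of a face. -/
def linkFace (K : Set (Finset V)) (F : Finset V) : Set (Finset V) :=
  {G | Disjoint F G ∧ F ∪ G ∈ K}

section Homology
variable (k : Type*) [Field k]

/-- Boundary of a single face, w.r.t. a linear order `lo` on the vertices. -/
noncomputable def bdFace (lo : LinearOrder V) (F : Finset V) : Finset V →₀ k :=
  letI := lo
  ∑ v ∈ F, ((-1 : k) ^ ((F.filter (fun w => w < v)).card)) • Finsupp.single (F.erase v) (1 : k)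

/-- The boundary operator of the augmented oriented chain complex, w.r.t. `lo`. -/
noncomputable def bd (lo : LinearOrder V) (c : Finset V →₀ k) : Finset V →₀ k :=
  c.sum fun F a => a • bdFace k lo F

/-- The reduced homology of `K` in the degree of faces of cardinality `j`
(i.e. dimension `j - 1`) vanishes over `k`. -/
def HomologyVanishes (K : Set (Finset V)) (j : ℕ) : Prop :=
  ∀ lo : LinearOrder V, ∀ c : Finset V →₀ k,
    (∀ F ∈ c.support, F ∈ K ∧ F.card = j) → bd k lo c = 0 →
      ∃ d : Finset V →₀ k, (∀ F ∈ d.support, F ∈ K ∧ F.card = j + 1) ∧ bd k lo d = c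

/-- Reisner's criterion: `K` is Cohen–Macaulay over the field `k`. -/
def IsCMover (K : Set (Finset V)) : Prop :=
  ∀ F ∈ K, ∀ j : ℕ, (∃ G ∈ linkFace K F, j < G.card) →
    HomologyVanishes k (linkFace K F) j

/-- `K` is sequentially Cohen–Macaulay over `k`. -/
def IsSeqCMover (K : Set (Finset V)) : Prop :=
  ∀ i : ℕ, IsCMover k (pureSkeleton K i)

/-- The core of a complex. -/
def core (K : Set (Finset V)) : Set (Finset V) :=
  {F ∈ K | ∀ v ∈ F, ∃ G, IsFacet K G ∧ v ∉ G}

/-- The top reduced homology of `K` is one-dimensional (`≅ k`), where the top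
cardinality of a face of `K` is `m`. -/
def TopHomologyIsK (K : Set (Finset V)) (m : ℕ) : Prop :=
  (∃ G ∈ K, G.card = m) ∧ (∀ G ∈ K, G.card ≤ m) ∧
  ∀ lo : LinearOrder V, ∃ c : Finset V →₀ k, c ≠ 0 ∧
    (∀ F ∈ c.support, F ∈ K ∧ F.card = m) ∧ bd k lo c = 0 ∧
    ∀ c' : Finset V →₀ k, (∀ F ∈ c'.support, F ∈ K ∧ F.card = m) → bd k lo c' = 0 →
      ∃ a : k, c' = a • c

/-- Stanley's criterion: `K` is Gorenstein over `k`. -/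
def IsGorensteinOver (K : Set (Finset V)) : Prop :=
  ∀ F ∈ core K, ∃ m : ℕ,
    TopHomologyIsK k (linkFace (core K) F) m ∧
    ∀ j : ℕ, j < m → HomologyVanishes k (linkFace (core K) F) j

end Homology


variable {n : ℕ}

def ev (n i : ℕ) (h : i < n) : (pathGraph (n+1)).edgeSet :=
  ⟨s(⟨i, by omega⟩, ⟨i+1, by omega⟩), by
    rw [SimpleGraph.mem_edgeSet, pathGraph_adj]; left; rfl⟩

lemma ev_surj (e : (pathGraph (n+1)).edgeSet) : ∃ i h, e = ev n i h := by
  obtain ⟨e, he⟩ := e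
  induction e using Sym2.ind with
  | _ u v =>
    rw [SimpleGraph.mem_edgeSet, pathGraph_adj] at he
    rcases he with h | h
    · refine ⟨u.val, by omega, ?_⟩
      simp only [ev, Subtype.ext_iff, Sym2.eq_iff]
      left
      constructor
      · trivial
      · apply Fin.ext; simp [← h]
    · refine ⟨v.val, by omega, ?_⟩
      simp only [ev, Subtype.ext_iff, Sym2.eq_iff]
      right
      constructor
      · apply Fin.ext; simp [← h]
      · trivial

lemma ev_inj {i j : ℕ} (hi : i < n) (hj : j < n) : ev n i hi = ev n j hj ↔ i = j := by
  simp only [ev, Subtype.ext_iff, Sym2.eq_iff, Fin.mk.injEq]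
  omega

lemma adj_ev {i j : ℕ} (hi : i < n) (hj : j < n) :
    (lineGraph (pathGraph (n+1))).Adj (ev n i hi) (ev n j hj) ↔ (i + 1 = j ∨ j + 1 = i) := by
  rw [lineGraph_adj_iff_exists]
  constructor
  · rintro ⟨hne, v, hv1, hv2⟩
    rw [ne_eq, ev_inj] at hne
    simp only [ev, Sym2.mem_iff] at hv1 hv2
    rcases hv1 with h1 | h1 <;> rcases hv2 with h2 | h2 <;>
      rw [h1] at h2 <;> rw [Fin.mk.injEq] at h2 <;> omega
  · intro h
    refine ⟨by rw [ne_eq, ev_inj]; omega, ?_⟩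
    rcases h with h | h
    · refine ⟨⟨j, by omega⟩, ?_, ?_⟩
      · simp only [ev, Sym2.mem_iff, Fin.mk.injEq]
        omega
      · simp [ev, Sym2.mem_iff]
    · refine ⟨⟨i, by omega⟩, ?_, ?_⟩
      · simp [ev, Sym2.mem_iff]
      · simp only [ev, Sym2.mem_iff, Fin.mk.injEq]
        omega
-- homology helper lemmas
section H
variable {V : Type*} [DecidableEq V] (k : Type*) [Field k] (lo : LinearOrder V)

lemma bdFace_empty : bdFace k lo (∅ : Finset V) = 0 := by
  simp [bdFace]

lemma bdFace_singleton (a : V) : bdFace k lo ({a} : Finset V) = Finsupp.single ∅ 1 := by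
  letI := lo
  simp [bdFace, Finset.filter_singleton]

lemma bd_single (F : Finset V) (a : k) :
    bd k lo (Finsupp.single F a) = a • bdFace k lo F := by
  rw [bd, Finsupp.sum_single_index]
  simp

lemma bd_singletons (c : Finset V →₀ k) (h : ∀ F ∈ c.support, F.card = 1) :
    bd k lo c = (c.sum fun _ a => a) • Finsupp.single ∅ (1 : k) := by
  rw [bd, Finsupp.sum, Finsupp.sum, Finset.sum_smul]
  apply Finset.sum_congr rfl
  intro F hF
  obtain ⟨x, rfl⟩ := Finset.card_eq_one.mp (h F hF)
  rw [bdFace_singleton]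

end H
section H2
variable {V : Type*} [DecidableEq V] (k : Type*) [Field k]

lemma bd_add (lo : LinearOrder V) (c d : Finset V →₀ k) :
    bd k lo (c + d) = bd k lo c + bd k lo d := by
  rw [bd, bd, bd]
  apply Finsupp.sum_add_index <;> intros <;> simp [add_smul]

lemma top_point : TopHomologyIsK k ({∅} : Set (Finset V)) 0 := by
  refine ⟨⟨∅, rfl, Finset.card_empty⟩, ?_, ?_⟩
  · rintro G rfl; simp
  · intro lo
    refine ⟨Finsupp.single ∅ 1, fun h => one_ne_zero (Finsupp.single_eq_zero.mp h), ?_, ?_, ?_⟩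
    · intro F hF
      rw [Finsupp.support_single_ne_zero _ one_ne_zero, Finset.mem_singleton] at hF
      subst hF; exact ⟨rfl, Finset.card_empty⟩
    · rw [bd_single, bdFace_empty, smul_zero]
    · intro c' hc' _
      have hs : c'.support ⊆ {∅} := by
        intro F hF
        rw [Finset.mem_singleton]
        exact Finset.card_eq_zero.mp (hc' F hF).2
      refine ⟨c' ∅, ?_⟩
      rw [Finsupp.smul_single', mul_one]
      exact Finsupp.support_subset_singleton.mp hs

lemma supp_pair {c : Finset V →₀ k} {x y : Finset V} (h : c.support ⊆ {x, y}) (hxy : x ≠ y) :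
    c = Finsupp.single x (c x) + Finsupp.single y (c y) := by
  ext F
  rcases eq_or_ne F x with rfl | hx
  · simp [Finsupp.single_eq_of_ne' hxy.symm]
  rcases eq_or_ne F y with rfl | hy
  · simp [Finsupp.single_eq_of_ne' hxy]
  · have hc : c F = 0 := by
      refine Finsupp.notMem_support_iff.mp (fun hF => ?_)
      have h' := h hF
      rw [Finset.mem_insert, Finset.mem_singleton] at h'
      rcases h' with h' | h'
      · exact hx h'
      · exact hy h'
    simp [hc, Finsupp.single_eq_of_ne' (Ne.symm hx), Finsupp.single_eq_of_ne' (Ne.symm hy)]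

lemma top_two (a c : V) (hac : a ≠ c) :
    TopHomologyIsK k ({∅, {a}, {c}} : Set (Finset V)) 1 := by
  have hfin : ({a} : Finset V) ≠ {c} := by
    simp [Finset.singleton_inj, hac]
  refine ⟨⟨{a}, by simp, Finset.card_singleton a⟩, ?_, ?_⟩
  · rintro G hG
    rcases hG with rfl | rfl | rfl <;> simp
  · intro lo
    set z : Finset V →₀ k := Finsupp.single {a} 1 + Finsupp.single {c} (-1) with hz
    have hza : z {a} = 1 := by
      rw [hz]
      simp [Finsupp.single_eq_of_ne' (Ne.symm hfin)]
    refine ⟨z, ?_, ?_, ?_, ?_⟩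
    · intro h0
      rw [h0] at hza
      simp at hza
    · intro F hF
      rw [hz] at hF
      have h2 := Finsupp.support_add hF
      rcases Finset.mem_union.mp h2 with h | h
      · have h3 := Finsupp.support_single_subset h
        rw [Finset.mem_singleton] at h3
        subst h3; exact ⟨by simp, by simp⟩
      · have h3 := Finsupp.support_single_subset h
        rw [Finset.mem_singleton] at h3
        subst h3; exact ⟨by simp, by simp⟩
    · rw [hz, bd_add, bd_single, bd_single, bdFace_singleton, bdFace_singleton]
      simp
    · intro c' hc' hbd
      have hs : c'.support ⊆ {{a}, {c}} := by
        intro F hF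
        obtain ⟨hm, hcard⟩ := hc' F hF
        rcases hm with rfl | rfl | rfl
        · simp at hcard
        · simp
        · simp
      set p := c' {a} with hp
      set q := c' {c} with hq
      have hdec : c' = Finsupp.single {a} p + Finsupp.single {c} q := supp_pair k hs hfin
      have hb : bd k lo c' = Finsupp.single ∅ (p + q) := by
        conv_lhs => rw [hdec]
        rw [bd_add, bd_single, bd_single, bdFace_singleton, bdFace_singleton,
          Finsupp.smul_single', Finsupp.smul_single', mul_one, mul_one, Finsupp.single_add]
      rw [hb] at hbd
      have hsum : p + q = 0 := Finsupp.single_eq_zero.mp hbd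
      refine ⟨p, ?_⟩
      rw [hdec, hz, smul_add, Finsupp.smul_single', Finsupp.smul_single', mul_one]
      have hq' : q = p * -1 := by linear_combination hsum
      rw [hq']

lemma van_zero (K : Set (Finset V)) (a : V) (ha : ({a} : Finset V) ∈ K) :
    HomologyVanishes k K 0 := by
  intro lo c hc _
  have hs : c.support ⊆ {∅} := by
    intro F hF
    rw [Finset.mem_singleton]
    exact Finset.card_eq_zero.mp (hc F hF).2
  refine ⟨Finsupp.single {a} (c ∅), ?_, ?_⟩
  · intro F hF
    have h3 := Finsupp.support_single_subset hF
    rw [Finset.mem_singleton] at h3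
    subst h3
    exact ⟨ha, Finset.card_singleton a⟩
  · rw [bd_single, bdFace_singleton, Finsupp.smul_single', mul_one]
    exact (Finsupp.support_subset_singleton.mp hs).symm

lemma linkFace_empty (K : Set (Finset V)) : linkFace K ∅ = K := by
  ext G; simp [linkFace]

lemma core_univ : core (Set.univ : Set (Finset V)) = {∅} := by
  ext F
  constructor
  · rintro ⟨-, h⟩
    rw [Set.mem_singleton_iff]
    by_contra hne
    obtain ⟨v, hv⟩ := Finset.nonempty_iff_ne_empty.mpr hne
    obtain ⟨G, hG, hvG⟩ := h v hv
    have := hG.2 (insert v G) (Set.mem_univ _) (Finset.subset_insert v G)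
    exact hvG (this ▸ Finset.mem_insert_self v G)
  · rintro rfl
    exact ⟨Set.mem_univ _, by simp⟩

lemma gor_univ : IsGorensteinOver k (Set.univ : Set (Finset V)) := by
  intro F hF
  rw [core_univ] at hF
  rw [Set.mem_singleton_iff] at hF
  subst hF
  refine ⟨0, ?_, ?_⟩
  · rw [core_univ, linkFace_empty]
    exact top_point k
  · omega

end H2
section PathClique
variable {n : ℕ}

lemma empty_mem_cc {W : Type*} [DecidableEq W] (G : SimpleGraph W) :
    (∅ : Finset W) ∈ cliqueComplex G := by
  simp [cliqueComplex]

lemma singleton_mem_cc {W : Type*} [DecidableEq W] (G : SimpleGraph W) (a : W) :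
    ({a} : Finset W) ∈ cliqueComplex G := by
  simp only [cliqueComplex, Set.mem_setOf_eq, Finset.coe_singleton]
  exact G.isClique_singleton a

lemma pair_mem_cc {W : Type*} [DecidableEq W] {G : SimpleGraph W} {a b : W} (h : G.Adj a b) :
    ({a, b} : Finset W) ∈ cliqueComplex G := by
  simp only [cliqueComplex, Set.mem_setOf_eq, Finset.coe_insert, Finset.coe_singleton]
  exact SimpleGraph.isClique_pair.mpr fun _ => h

lemma cc_card_le_two {F : Finset (pathGraph (n+1)).edgeSet}
    (hF : F ∈ cliqueComplex (lineGraph (pathGraph (n+1)))) : F.card ≤ 2 := by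
  by_contra hlt
  obtain ⟨a, b, c, ha, hb, hc, hab, hac, hbc⟩ :=
    Finset.two_lt_card_iff.mp (show 2 < F.card by omega)
  obtain ⟨i, hi, rfl⟩ := ev_surj a
  obtain ⟨j, hj, rfl⟩ := ev_surj b
  obtain ⟨l, hl, rfl⟩ := ev_surj c
  have h1 := (adj_ev hi hj).mp (hF ha hb hab)
  have h2 := (adj_ev hi hl).mp (hF ha hc hac)
  have h3 := (adj_ev hj hl).mp (hF hb hc hbc)
  rw [ne_eq, ev_inj] at hab hac hbc
  omega

lemma pair_facet {i j : ℕ} (hi : i < n) (hj : j < n)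
    (hadj : (lineGraph (pathGraph (n+1))).Adj (ev n i hi) (ev n j hj)) :
    IsFacet (cliqueComplex (lineGraph (pathGraph (n+1)))) {ev n i hi, ev n j hj} := by
  have hne : ev n i hi ≠ ev n j hj := hadj.ne
  refine ⟨pair_mem_cc hadj, fun G hG hsub => ?_⟩
  refine Finset.eq_of_subset_of_card_le hsub ?_
  calc G.card ≤ 2 := cc_card_le_two hG
  _ = ({ev n i hi, ev n j hj} : Finset _).card := (Finset.card_pair hne).symm

/-- adjacent to ev 0 implies equal ev 1 -/
lemma adj_zero {j : ℕ} (h0 : 0 < n) (hj : j < n)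
    (h : (lineGraph (pathGraph (n+1))).Adj (ev n 0 h0) (ev n j hj)) : j = 1 := by
  have := (adj_ev h0 hj).mp h
  omega

end PathClique
section H3
variable {V : Type*} [DecidableEq V]

lemma link_single (a c : V) (hac : a ≠ c) :
    linkFace ({∅, {a}, {c}} : Set (Finset V)) {a} = {∅} := by
  ext G
  simp only [linkFace, Set.mem_setOf_eq, Set.mem_singleton_iff]
  constructor
  · rintro ⟨hd, hu⟩
    have hmem : a ∈ ({a} : Finset V) ∪ G := Finset.mem_union_left _ (Finset.mem_singleton_self a)
    rcases hu with hu | hu | hu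
    · rw [hu] at hmem; simp at hmem
    · have hsub : G ⊆ {a} := hu ▸ Finset.subset_union_right
      rcases Finset.subset_singleton_iff.mp hsub with h | h
      · exact h
      · exfalso
        apply Finset.disjoint_left.mp hd (Finset.mem_singleton_self a)
        rw [h]; simp
    · rw [hu] at hmem
      exact absurd (Finset.mem_singleton.mp hmem) hac
  · rintro rfl
    refine ⟨Finset.disjoint_empty_right _, Or.inr (Or.inl ?_)⟩
    simp

lemma link_single' (a c : V) (hac : a ≠ c) :
    linkFace ({∅, {a}, {c}} : Set (Finset V)) {c} = {∅} := by
  have h : ({∅, {a}, {c}} : Set (Finset V)) = {∅, {c}, {a}} :=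
    congrArg (insert ∅) (Set.pair_comm {a} {c})
  rw [h]
  exact link_single c a hac.symm

lemma gor_two_points (k : Type*) [Field k] (K : Set (Finset V)) (a c : V) (hac : a ≠ c)
    (hcore : core K = {∅, {a}, {c}}) : IsGorensteinOver k K := by
  intro F hF
  rw [hcore] at hF
  rcases hF with rfl | rfl | rfl
  · refine ⟨1, ?_, ?_⟩
    · rw [hcore, linkFace_empty]
      exact top_two k a c hac
    · intro j hj
      interval_cases j
      rw [hcore, linkFace_empty]
      exact van_zero k _ a (by simp)
  · refine ⟨0, ?_, fun j hj => by omega⟩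
    rw [hcore, link_single a c hac]
    exact top_point k
  · refine ⟨0, ?_, fun j hj => by omega⟩
    rw [hcore, link_single' a c hac]
    exact top_point k

end H3
section Small
lemma cc_univ {n : ℕ} (hn2 : n ≤ 2) :
    cliqueComplex (lineGraph (pathGraph (n+1))) = Set.univ := by
  ext F
  simp only [Set.mem_univ, iff_true, cliqueComplex, Set.mem_setOf_eq]
  intro a ha b hb hab
  obtain ⟨i, hi, rfl⟩ := ev_surj a
  obtain ⟨j, hj, rfl⟩ := ev_surj b
  rw [ne_eq, ev_inj] at hab
  rw [adj_ev]
  omega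

def b0 : (pathGraph (3+1)).edgeSet := ev 3 0 (by omega)
def b1 : (pathGraph (3+1)).edgeSet := ev 3 1 (by omega)
def b2 : (pathGraph (3+1)).edgeSet := ev 3 2 (by omega)

lemma b_classify (x : (pathGraph (3+1)).edgeSet) : x = b0 ∨ x = b1 ∨ x = b2 := by
  obtain ⟨i, hi, rfl⟩ := ev_surj x
  interval_cases i
  · exact Or.inl rfl
  · exact Or.inr (Or.inl rfl)
  · exact Or.inr (Or.inr rfl)

lemma hb01 : (lineGraph (pathGraph (3+1))).Adj b0 b1 := (adj_ev _ _).mpr (Or.inl rfl)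
lemma hb12 : (lineGraph (pathGraph (3+1))).Adj b1 b2 := (adj_ev _ _).mpr (Or.inl rfl)
lemma hb02 : ¬ (lineGraph (pathGraph (3+1))).Adj b0 b2 := by
  rw [b0, b2, adj_ev]; omega

lemma bne01 : b0 ≠ b1 := hb01.ne
lemma bne12 : b1 ≠ b2 := hb12.ne
lemma bne02 : b0 ≠ b2 := by rw [b0, b2, ne_eq, ev_inj]; omega

lemma facet_b1 {G : Finset (pathGraph (3+1)).edgeSet}
    (hG : IsFacet (cliqueComplex (lineGraph (pathGraph (3+1)))) G) : b1 ∈ G := by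
  by_contra h1
  by_cases h0 : b0 ∈ G
  · have h2 : b2 ∉ G := fun h2 => hb02 (hG.1 h0 h2 bne02)
    have hsub : G ⊆ {b0, b1} := by
      intro x hx
      rcases b_classify x with rfl | rfl | rfl
      · simp
      · exact absurd hx h1
      · exact absurd hx h2
    have := hG.2 {b0, b1} (pair_mem_cc hb01) hsub
    exact h1 (this ▸ (by simp : b1 ∈ ({b0, b1} : Finset _)))
  · have hsub : G ⊆ {b1, b2} := by
      intro x hx
      rcases b_classify x with rfl | rfl | rfl
      · exact absurd hx h0
      · exact absurd hx h1
      · simp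
    have := hG.2 {b1, b2} (pair_mem_cc hb12) hsub
    exact h1 (this ▸ (by simp : b1 ∈ ({b1, b2} : Finset _)))

lemma core_three :
    core (cliqueComplex (lineGraph (pathGraph (3+1)))) = {∅, {b0}, {b2}} := by
  ext F
  constructor
  · rintro ⟨hK, h⟩
    have h1 : b1 ∉ F := by
      intro h1
      obtain ⟨G, hG, hbG⟩ := h b1 h1
      exact hbG (facet_b1 hG)
    by_cases h0 : b0 ∈ F
    · have h2 : b2 ∉ F := fun h2 => hb02 (hK h0 h2 bne02)
      have hsub : F ⊆ {b0} := by
        intro x hx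
        rcases b_classify x with rfl | rfl | rfl
        · simp
        · exact absurd hx h1
        · exact absurd hx h2
      rcases Finset.subset_singleton_iff.mp hsub with rfl | rfl
      · exact Or.inl rfl
      · exact Or.inr (Or.inl rfl)
    · have hsub : F ⊆ {b2} := by
        intro x hx
        rcases b_classify x with rfl | rfl | rfl
        · exact absurd hx h0
        · exact absurd hx h1
        · simp
      rcases Finset.subset_singleton_iff.mp hsub with rfl | rfl
      · exact Or.inl rfl
      · exact Or.inr (Or.inr rfl)
  · rintro (rfl | rfl | rfl)
    · exact ⟨empty_mem_cc _, by simp⟩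
    · refine ⟨singleton_mem_cc _ _, fun v hv => ⟨{b1, b2}, pair_facet _ _ hb12, ?_⟩⟩
      rw [Finset.mem_singleton] at hv
      subst hv
      simp only [Finset.mem_insert, Finset.mem_singleton]
      push_neg
      exact ⟨bne01, bne02⟩
    · refine ⟨singleton_mem_cc _ _, fun v hv => ⟨{b0, b1}, pair_facet _ _ hb01, ?_⟩⟩
      rw [Finset.mem_singleton] at hv
      subst hv
      simp only [Finset.mem_insert, Finset.mem_singleton]
      push_neg
      exact ⟨bne02.symm, bne12.symm⟩

end Small
section Big

lemma not_gor {n : ℕ} (hn : 4 ≤ n) (k : Type*) [Field k] :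
    ¬ IsGorensteinOver k (cliqueComplex (lineGraph (pathGraph (n+1)))) := by
  have h0 : 0 < n := by omega
  have h1 : 1 < n := by omega
  have h2 : 2 < n := by omega
  have h3 : 3 < n := by omega
  intro hg
  have hadj01 : (lineGraph (pathGraph (n+1))).Adj (ev n 0 h0) (ev n 1 h1) :=
    (adj_ev _ _).mpr (Or.inl rfl)
  have hadj23 : (lineGraph (pathGraph (n+1))).Adj (ev n 2 h2) (ev n 3 h3) :=
    (adj_ev _ _).mpr (Or.inl rfl)
  have hfacet := pair_facet h2 h3 hadj23
  have hnotmem : ∀ (i : ℕ) (hi : i < n), i ≤ 1 →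
      ev n i hi ∉ ({ev n 2 h2, ev n 3 h3} : Finset _) := by
    intro i hi hile
    simp only [Finset.mem_insert, Finset.mem_singleton, ev_inj]
    omega
  have hmem0 : ({ev n 0 h0} : Finset _) ∈
      core (cliqueComplex (lineGraph (pathGraph (n+1)))) := by
    refine ⟨singleton_mem_cc _ _, fun v hv => ⟨_, hfacet, ?_⟩⟩
    rw [Finset.mem_singleton] at hv
    subst hv
    exact hnotmem 0 h0 (by omega)
  have hmem01 : ({ev n 0 h0, ev n 1 h1} : Finset _) ∈
      core (cliqueComplex (lineGraph (pathGraph (n+1)))) := by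
    refine ⟨pair_mem_cc hadj01, fun v hv => ⟨_, hfacet, ?_⟩⟩
    rw [Finset.mem_insert, Finset.mem_singleton] at hv
    rcases hv with rfl | rfl
    · exact hnotmem 0 h0 (by omega)
    · exact hnotmem 1 h1 (by omega)
  have hlink : linkFace (core (cliqueComplex (lineGraph (pathGraph (n+1))))) {ev n 0 h0}
      = {∅, {ev n 1 h1}} := by
    ext G
    simp only [linkFace, Set.mem_setOf_eq, Set.mem_insert_iff, Set.mem_singleton_iff]
    constructor
    · rintro ⟨hd, hu⟩
      have hK := hu.1
      have hcard := cc_card_le_two hK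
      have hdisj : Disjoint ({ev n 0 h0} : Finset _) G := hd
      have hcu : ({ev n 0 h0} : Finset _).card + G.card = (({ev n 0 h0} : Finset _) ∪ G).card :=
        (Finset.card_union_of_disjoint hdisj).symm
      rw [Finset.card_singleton] at hcu
      have hG1 : G.card ≤ 1 := by omega
      rcases G.eq_empty_or_nonempty with rfl | ⟨x, hx⟩
      · exact Or.inl rfl
      · right
        have hGx : G = {x} := by
          apply Finset.eq_singleton_iff_unique_mem.mpr
          refine ⟨hx, fun y hy => ?_⟩
          by_contra hne
          have := Finset.one_lt_card_iff.mpr ⟨y, x, hy, hx, hne⟩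
          omega
        subst hGx
        have hxne : ev n 0 h0 ≠ x := by
          intro h
          exact Finset.disjoint_left.mp hdisj (Finset.mem_singleton_self _)
            (h ▸ Finset.mem_singleton_self x)
        have hadj : (lineGraph (pathGraph (n+1))).Adj (ev n 0 h0) x := by
          apply hK (Finset.mem_union_left _ (Finset.mem_singleton_self _))
            (Finset.mem_union_right _ (Finset.mem_singleton_self _)) hxne
        obtain ⟨j, hj, rfl⟩ := ev_surj x
        have := adj_zero h0 hj hadj
        subst this
        rfl
    · rintro (rfl | rfl)
      · refine ⟨Finset.disjoint_empty_right _, ?_⟩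
        rw [Finset.union_empty]
        exact hmem0
      · refine ⟨?_, ?_⟩
        · rw [Finset.disjoint_singleton]
          rw [ne_eq, ev_inj]
          omega
        · rw [← Finset.insert_eq]
          exact hmem01
  obtain ⟨m, htop, -⟩ := hg {ev n 0 h0} hmem0
  rw [hlink] at htop
  obtain ⟨⟨G, hG, hGcard⟩, hle, hlo⟩ := htop
  have hm1 : m = 1 := by
    have hle1 := hle {ev n 1 h1} (Or.inr rfl)
    rw [Finset.card_singleton] at hle1
    rcases hG with rfl | rfl
    · rw [Finset.card_empty] at hGcard; omega
    · rw [Finset.card_singleton] at hGcard; omega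
  subst hm1
  obtain ⟨c, hc0, hcsupp, hcbd, -⟩ := hlo (IsWellOrder.linearOrder WellOrderingRel)
  have hs : c.support ⊆ {({ev n 1 h1} : Finset _)} := by
    intro F hF
    obtain ⟨hm, hcard⟩ := hcsupp F hF
    rw [Finset.mem_singleton]
    rcases hm with rfl | rfl
    · rw [Finset.card_empty] at hcard; omega
    · rfl
  have hcdec := Finsupp.support_subset_singleton.mp hs
  rw [hcdec] at hcbd
  rw [bd_single, bdFace_singleton, Finsupp.smul_single', mul_one] at hcbd
  have hz : c {ev n 1 h1} = 0 := Finsupp.single_eq_zero.mp hcbd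
  rw [hz, Finsupp.single_zero] at hcdec
  exact hc0 hcdec

end Big
theorem stmt19 (n : ℕ) (hn : 1 ≤ n) :
    (∀ (k : Type) [Field k],
        IsGorensteinOver k (cliqueComplex (SimpleGraph.lineGraph (pathGraph (n + 1))))) ↔
      n ≤ 3 := by
  constructor
  · intro h
    by_contra hn3
    exact not_gor (by omega) ℚ (h ℚ)
  · intro h3 k _
    interval_cases n
    · rw [cc_univ (by omega)]
      exact gor_univ k
    · rw [cc_univ (by omega)]
      exact gor_univ k
    · exact gor_two_points k _ b0 b2 bne02 core_three
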